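/- The von Neumann entropy function h(X) = tr(X log X) is strictly convex on the spectrahedron 𝒳 = {X Hermitian M×M : X ⪰ 0, tr(X) = 1} (interpreting x log x = 0 at x = 0). -/

import Mathlib

open Matrix
open scoped ComplexOrder

/-- The von Neumann entropy functional `h(X) = tr(X log X) = Σᵢ λᵢ log λᵢ` (with `0 log 0 = 0`),
defined through the eigenvalues of `X` when `X` is Hermitian, and `0` otherwise. -/
noncomputable def vonNeumannEntropy {M : ℕ} (X : Matrix (Fin M) (Fin M) ℂ) : ℝ :=
  if hX : X.IsHermitian then ∑ i, hX.eigenvalues i * Real.log (hX.eigenvalues i) else 0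

section Aux

open Finset

variable {M : ℕ}

private lemma psd_smul {t : ℝ} (ht : 0 ≤ t) {A : Matrix (Fin M) (Fin M) ℂ}
    (hA : A.PosSemidef) : (t • A).PosSemidef := by
  exact hA.smul ht


private lemma peierls {A : Matrix (Fin M) (Fin M) ℂ} (hA : A.PosSemidef)
    {U : Matrix (Fin M) (Fin M) ℂ} (hU : U ∈ Matrix.unitaryGroup (Fin M) ℂ) :
    (∀ j, 0 ≤ ((star U * A * U) j j).re) ∧
    (∑ j, ((star U * A * U) j j).re * Real.log (((star U * A * U) j j).re)
        ≤ vonNeumannEntropy A) ∧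
    ((∑ j, ((star U * A * U) j j).re * Real.log (((star U * A * U) j j).re)
        = vonNeumannEntropy A) →
      star U * A * U = Matrix.diagonal (fun j => ((((star U * A * U) j j).re : ℝ) : ℂ))) := by
  classical
  have hH := hA.1
  set V : Matrix (Fin M) (Fin M) ℂ := (hH.eigenvectorUnitary : Matrix (Fin M) (Fin M) ℂ) with hVdef
  have hV : V ∈ Matrix.unitaryGroup (Fin M) ℂ := (hH.eigenvectorUnitary).2
  set α : Fin M → ℝ := hH.eigenvalues with hαdef
  set D : Matrix (Fin M) (Fin M) ℂ := Matrix.diagonal (RCLike.ofReal ∘ α) with hDdef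
  set T : Matrix (Fin M) (Fin M) ℂ := star V * U with hTdef
  have hT : T ∈ Matrix.unitaryGroup (Fin M) ℂ := mul_mem (Unitary.star_mem hV) hU
  have hT1 : star T * T = 1 := mem_unitaryGroup_iff'.mp hT
  have hT2 : T * star T = 1 := mem_unitaryGroup_iff.mp hT
  have hstarT : star T = star U * V := by rw [hTdef, StarMul.star_mul, star_star]
  have hNT : star U * A * U = star T * D * T := by
    rw [hstarT, hTdef]
    rw [hH.spectral_theorem, Unitary.conjStarAlgAut_apply]
    simp only [Matrix.mul_assoc, hVdef, hDdef]
    rfl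
  set α' : Fin M → ℂ := fun k => ((α k : ℝ) : ℂ) with hα'def
  have hD : D = Matrix.diagonal α' := rfl
  have hentry : ∀ j, (star U * A * U) j j
      = ∑ k, α' k * ((Complex.normSq (T k j) : ℝ) : ℂ) := by
    intro j
    rw [hNT, Matrix.mul_assoc, Matrix.mul_apply]
    refine Finset.sum_congr rfl fun k _ => ?_
    rw [Matrix.star_apply, hD, Matrix.diagonal_mul]
    rw [show star (T k j) * (α' k * T k j) = α' k * (star (T k j) * T k j) by ring]
    rw [Complex.star_def, mul_comm ((starRingEnd ℂ) (T k j)), Complex.mul_conj]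
  set W : Fin M → Fin M → ℝ := fun j k => Complex.normSq (T k j) with hWdef
  have hW0 : ∀ j k, 0 ≤ W j k := fun j k => Complex.normSq_nonneg _
  set a : Fin M → ℝ := fun j => ((star U * A * U) j j).re with hadef
  have ha : ∀ j, a j = ∑ k, W j k * α k := by
    intro j
    rw [hadef]
    simp only [hentry j, Complex.re_sum]
    refine Finset.sum_congr rfl fun k _ => ?_
    rw [hα'def]
    push_cast
    rw [Complex.mul_re]
    simp [mul_comm, hWdef]
  have hcol : ∀ j, ∑ k, W j k = 1 := by
    intro j
    have h1 : (star T * T) j j = (1 : Matrix (Fin M) (Fin M) ℂ) j j := by rw [hT1]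
    rw [Matrix.mul_apply, Matrix.one_apply_eq] at h1
    have h2 := congrArg Complex.re h1
    simp only [Complex.re_sum, Complex.one_re] at h2
    rw [← h2]
    refine Finset.sum_congr rfl fun k _ => ?_
    rw [Matrix.star_apply, Complex.star_def, mul_comm, Complex.mul_conj]
    simp [hWdef]
  have hrow : ∀ k, ∑ j, W j k = 1 := by
    intro k
    have h1 : (T * star T) k k = (1 : Matrix (Fin M) (Fin M) ℂ) k k := by rw [hT2]
    rw [Matrix.mul_apply, Matrix.one_apply_eq] at h1
    have h2 := congrArg Complex.re h1
    simp only [Complex.re_sum, Complex.one_re] at h2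
    rw [← h2]
    refine Finset.sum_congr rfl fun j _ => ?_
    rw [Matrix.star_apply, Complex.star_def, Complex.mul_conj]
    simp [hWdef]
  have hα : ∀ k, 0 ≤ α k := fun k => hA.eigenvalues_nonneg k
  have ha0 : ∀ j, 0 ≤ a j := by
    intro j
    rw [ha j]
    exact Finset.sum_nonneg fun k _ => mul_nonneg (hW0 j k) (hα k)
  have hvne : vonNeumannEntropy A = ∑ k, α k * Real.log (α k) := by
    rw [vonNeumannEntropy, dif_pos hH]
  have hjensen : ∀ j, a j * Real.log (a j) ≤ ∑ k, W j k * (α k * Real.log (α k)) := by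
    intro j
    have := Real.convexOn_mul_log.map_sum_le (t := Finset.univ) (w := W j) (p := α)
      (fun k _ => hW0 j k) (hcol j) (fun k _ => hα k)
    simp only [smul_eq_mul] at this
    rw [ha j]
    exact this
  have hswap : ∑ j, ∑ k, W j k * (α k * Real.log (α k)) = ∑ k, α k * Real.log (α k) := by
    rw [Finset.sum_comm]
    refine Finset.sum_congr rfl fun k _ => ?_
    rw [← Finset.sum_mul, hrow k, one_mul]
  have hle : ∑ j, a j * Real.log (a j) ≤ vonNeumannEntropy A := by
    rw [hvne, ← hswap]
    exact Finset.sum_le_sum fun j _ => hjensen j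
  refine ⟨ha0, hle, ?_⟩
  intro heq
  have heach : ∀ j, a j * Real.log (a j) = ∑ k, W j k * (α k * Real.log (α k)) := by
    intro j
    refine (Finset.sum_eq_sum_iff_of_le (fun j _ => hjensen j)).1 ?_ j (Finset.mem_univ j)
    rw [heq, hvne, hswap]
  have hkey : ∀ j k, T k j ≠ 0 → α k = a j := by
    intro j k hTkj
    set s : Finset (Fin M) := Finset.univ.filter (fun k => W j k ≠ 0) with hsdef
    have hks : k ∈ s := by
      simp only [hsdef, Finset.mem_filter, Finset.mem_univ, true_and, hWdef]
      simpa using hTkj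
    have hsum1 : ∑ k ∈ s, W j k = 1 := by
      rw [hsdef, Finset.sum_filter_ne_zero, hcol j]
    have hsa : ∑ k ∈ s, W j k * α k = a j := by
      rw [hsdef, Finset.sum_filter_of_ne, ← ha j]
      intro x _ hx hWx
      exact hx (by rw [hWx, zero_mul])
    have hsf : ∑ k ∈ s, W j k * (α k * Real.log (α k)) = a j * Real.log (a j) := by
      rw [hsdef, Finset.sum_filter_of_ne, ← heach j]
      intro x _ hx hWx
      exact hx (by rw [hWx, zero_mul])
    have hall := Real.strictConvexOn_mul_log.eq_of_le_map_sum (t := s) (w := W j) (p := α)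
      (fun k hk => lt_of_le_of_ne (hW0 j k) (Ne.symm ((Finset.mem_filter.1 hk).2)))
      hsum1 (fun k _ => hα k)
      (by simp only [smul_eq_mul]; rw [hsf, hsa])
    have : a j = ∑ k' ∈ s, W j k' * α k := by
      rw [← hsa]
      exact Finset.sum_congr rfl fun k' hk' => by rw [hall hk' hks]
    rw [this, ← Finset.sum_mul, hsum1, one_mul]
  have hDT : D * T = T * Matrix.diagonal (fun j => ((a j : ℝ) : ℂ)) := by
    ext k j
    rw [hD, Matrix.diagonal_mul, Matrix.mul_diagonal]
    by_cases hTkj : T k j = 0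
    · rw [hTkj, mul_zero, zero_mul]
    · show ((α k : ℝ) : ℂ) * T k j = T k j * ((a j : ℝ) : ℂ)
      rw [hkey j k hTkj, mul_comm]
  calc star U * A * U = star T * D * T := hNT
    _ = star T * T * Matrix.diagonal (fun j => ((a j : ℝ) : ℂ)) := by
        rw [Matrix.mul_assoc, hDT, ← Matrix.mul_assoc]
    _ = Matrix.diagonal (fun j => ((a j : ℝ) : ℂ)) := by rw [hT1, Matrix.one_mul]

end Aux

/-- `h(X) = tr(X log X)` is strictly convex on the spectrahedron
`{X ⪰ 0 : tr X = 1}`. -/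
theorem vonNeumannEntropy_strictConvexOn {M : ℕ} :
    StrictConvexOn ℝ
      {X : Matrix (Fin M) (Fin M) ℂ | X.PosSemidef ∧ X.trace = 1}
      (vonNeumannEntropy (M := M)) := by
  classical
  constructor
  · rintro X ⟨hX, hXt⟩ Y ⟨hY, hYt⟩ p q hp hq hpq
    refine ⟨(psd_smul hp hX).add (psd_smul hq hY), ?_⟩
    rw [trace_add, trace_smul, trace_smul, hXt, hYt, Complex.real_smul, Complex.real_smul,
      mul_one, mul_one, ← Complex.ofReal_add, hpq, Complex.ofReal_one]
  · rintro A ⟨hA, -⟩ B ⟨hB, -⟩ hAB t s ht hs hts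
    have hCpsd : (t • A + s • B).PosSemidef := (psd_smul ht.le hA).add (psd_smul hs.le hB)
    have hHC := hCpsd.1
    set U : Matrix (Fin M) (Fin M) ℂ := (hHC.eigenvectorUnitary : Matrix (Fin M) (Fin M) ℂ)
      with hUdef
    have hU : U ∈ Matrix.unitaryGroup (Fin M) ℂ := (hHC.eigenvectorUnitary).2
    obtain ⟨hA0, hAle, hAeq⟩ := peierls hA hU
    obtain ⟨hB0, hBle, hBeq⟩ := peierls hB hU
    set a : Fin M → ℝ := fun j => ((star U * A * U) j j).re with hadef
    set b : Fin M → ℝ := fun j => ((star U * B * U) j j).re with hbdef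
    set c : Fin M → ℝ := hHC.eigenvalues with hcdef
    have hdiag : star U * (t • A + s • B) * U = Matrix.diagonal (RCLike.ofReal ∘ c) := by
      have hsp : t • A + s • B = U * Matrix.diagonal (RCLike.ofReal ∘ c) * star U :=
        hHC.spectral_theorem
      have hU1 : star U * U = 1 := mem_unitaryGroup_iff'.mp hU
      rw [hsp]
      simp only [Matrix.mul_assoc]
      rw [hU1, Matrix.mul_one, ← Matrix.mul_assoc, hU1, Matrix.one_mul]
    have hlin : star U * (t • A + s • B) * U
        = t • (star U * A * U) + s • (star U * B * U) := by
      simp only [Matrix.mul_add, Matrix.add_mul, Matrix.mul_smul, Matrix.smul_mul]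
    have hc : ∀ j, c j = t * a j + s * b j := by
      intro j
      have h1 : (star U * (t • A + s • B) * U) j j = ((c j : ℝ) : ℂ) := by
        rw [hdiag]; simp
      have h2 : (star U * (t • A + s • B) * U) j j
          = t • (star U * A * U) j j + s • (star U * B * U) j j := by
        rw [hlin]; simp [Matrix.add_apply]
      have := h1.symm.trans h2
      have h3 := congrArg Complex.re this
      simpa [Complex.real_smul, Complex.mul_re] using h3
    have hvC : vonNeumannEntropy (t • A + s • B)
        = ∑ j, (t * a j + s * b j) * Real.log (t * a j + s * b j) := by
      rw [vonNeumannEntropy, dif_pos hHC]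
      exact Finset.sum_congr rfl fun j _ => by rw [← hcdef, hc j]
    have hmemA : ∀ j, a j ∈ Set.Ici (0:ℝ) := fun j => hA0 j
    have hmemB : ∀ j, b j ∈ Set.Ici (0:ℝ) := fun j => hB0 j
    rw [hvC, smul_eq_mul, smul_eq_mul]
    by_cases hex : ∃ j, a j ≠ b j
    · obtain ⟨j₀, hj₀⟩ := hex
      have step1 : ∑ j, (t * a j + s * b j) * Real.log (t * a j + s * b j)
          < ∑ j, (t * (a j * Real.log (a j)) + s * (b j * Real.log (b j))) := by
        refine Finset.sum_lt_sum (fun j _ => ?_) ⟨j₀, Finset.mem_univ j₀, ?_⟩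
        · have := Real.convexOn_mul_log.2 (hmemA j) (hmemB j) ht.le hs.le hts
          simpa [smul_eq_mul] using this
        · have := Real.strictConvexOn_mul_log.2 (hmemA j₀) (hmemB j₀) hj₀ ht hs hts
          simpa [smul_eq_mul] using this
      calc ∑ j, (t * a j + s * b j) * Real.log (t * a j + s * b j)
          < ∑ j, (t * (a j * Real.log (a j)) + s * (b j * Real.log (b j))) := step1
        _ = t * (∑ j, a j * Real.log (a j)) + s * (∑ j, b j * Real.log (b j)) := by
            rw [Finset.sum_add_distrib, Finset.mul_sum, Finset.mul_sum]
        _ ≤ t * vonNeumannEntropy A + s * vonNeumannEntropy B := by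
            gcongr
    · push_neg at hex
      have hABne : ¬(∑ j, a j * Real.log (a j) = vonNeumannEntropy A
          ∧ ∑ j, b j * Real.log (b j) = vonNeumannEntropy B) := by
        rintro ⟨h1, h2⟩
        have e1 := hAeq h1
        have e2 := hBeq h2
        have : star U * A * U = star U * B * U := by
          rw [e1, e2]
          exact congrArg _ (funext fun j => congrArg Complex.ofReal (hex j))
        have hUU : U * star U = 1 := mem_unitaryGroup_iff.mp hU
        have key : ∀ X : Matrix (Fin M) (Fin M) ℂ, U * (star U * X * U) * star U = X := by
          intro X
          calc U * (star U * X * U) * star U = (U * star U) * X * (U * star U) := by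
                simp only [Matrix.mul_assoc]
            _ = X := by rw [hUU, Matrix.one_mul, Matrix.mul_one]
        exact hAB (by rw [← key A, this, key B])
      have heqab : ∀ j, (t * a j + s * b j) * Real.log (t * a j + s * b j)
          = a j * Real.log (a j) := by
        intro j
        rw [← hex j]
        have : t * a j + s * a j = a j := by rw [← add_mul, hts, one_mul]
        rw [this]
      have hstrict : ∑ j, a j * Real.log (a j) < vonNeumannEntropy A
          ∨ ∑ j, b j * Real.log (b j) < vonNeumannEntropy B := by
        rcases lt_or_eq_of_le hAle with h | h
        · exact Or.inl h
        · rcases lt_or_eq_of_le hBle with h' | h'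
          · exact Or.inr h'
          · exact absurd ⟨h, h'⟩ hABne
      have hsame : ∑ j, b j * Real.log (b j) = ∑ j, a j * Real.log (a j) :=
        Finset.sum_congr rfl fun j _ => by rw [hex j]
      calc ∑ j, (t * a j + s * b j) * Real.log (t * a j + s * b j)
          = ∑ j, a j * Real.log (a j) := Finset.sum_congr rfl fun j _ => heqab j
        _ = t * (∑ j, a j * Real.log (a j)) + s * (∑ j, b j * Real.log (b j)) := by
            rw [hsame, ← add_mul, hts, one_mul]
        _ < t * vonNeumannEntropy A + s * vonNeumannEntropy B := by
            rcases hstrict with h | h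
            · have h2 : s * (∑ j, b j * Real.log (b j)) ≤ s * vonNeumannEntropy B := by
                exact mul_le_mul_of_nonneg_left hBle hs.le
              nlinarith
            · have h2 : t * (∑ j, a j * Real.log (a j)) ≤ t * vonNeumannEntropy A :=
                mul_le_mul_of_nonneg_left hAle ht.le
              nlinarith
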